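/- arXiv:2204.11098 — 3 statements merged into one kernel-verified Lean document; each statement's English description precedes it below -/
import Mathlib

section
/- Let I be a finite nonempty index set, let (w_i)_{i∈I} be positive real weights with ∑_{i∈I} w_i = 1, let (μ_i)_{i∈I} be probability measures on a measurable space, and let g be a probability measure on the same space. Let μ_AA = ∑_{i∈I} w_i μ_i. If D_KL(μ_i ‖ g) is finite for every i ∈ I, then ∑_{i∈I} w_i · D_KL(μ_i ‖ g) = ∑_{i∈I} w_i · D_KL(μ_i ‖ μ_AA) + D_KL(μ_AA ‖ g). -/
open MeasureTheory BigOperators ENNReal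
open scoped Classical

/-- Kullback–Leibler divergence: `∫ log (dμ/dν) dμ` when `μ ≪ ν` and the log-likelihood
ratio is integrable, and `+∞` otherwise. -/
noncomputable def klDiv {α : Type*} [MeasurableSpace α] (μ ν : Measure α) : ℝ≥0∞ :=
  if μ ≪ ν ∧ Integrable (llr μ ν) μ then ENNReal.ofReal (∫ x, llr μ ν x ∂μ) else ⊤

section Aux

variable {α : Type*} [MeasurableSpace α] {μ ν : Measure α}

lemma aux_mul_neg_log_le_one {r : ℝ} (hr : 0 ≤ r) : r * max (-Real.log r) 0 ≤ 1 := by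
  rcases eq_or_lt_of_le hr with h | h
  · simp [← h]
  rcases le_or_gt (-Real.log r) 0 with h0 | h0
  · rw [max_eq_right h0]
    simp
  · rw [max_eq_left h0.le]
    have h1 : Real.log r⁻¹ ≤ r⁻¹ - 1 := Real.log_le_sub_one_of_pos (inv_pos.2 h)
    rw [Real.log_inv] at h1
    have h2 : r * (-Real.log r) ≤ r * (r⁻¹ - 1) := mul_le_mul_of_nonneg_left h1 hr
    have h3 : r * (r⁻¹ - 1) = 1 - r := by field_simp
    linarith

lemma aux_integrable_neg_part_llr [IsFiniteMeasure μ] [IsFiniteMeasure ν] (hμν : μ ≪ ν) :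
    Integrable (fun x => max (- llr μ ν x) 0) μ := by
  rw [← MeasureTheory.integrable_rnDeriv_smul_iff hμν]
  refine Integrable.mono' (integrable_const (1 : ℝ)) ?_ ?_
  · simp only [smul_eq_mul]
    exact ((Measure.measurable_rnDeriv μ ν).ennreal_toReal.mul
      (((measurable_llr μ ν).neg).max measurable_const)).aestronglyMeasurable
  · refine Filter.Eventually.of_forall fun x => ?_
    have h1 : (0:ℝ) ≤ (μ.rnDeriv ν x).toReal := ENNReal.toReal_nonneg
    have h2 : (0:ℝ) ≤ max (- llr μ ν x) 0 := le_max_right _ _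
    rw [smul_eq_mul, Real.norm_eq_abs, abs_of_nonneg (mul_nonneg h1 h2)]
    exact aux_mul_neg_log_le_one h1

lemma aux_integrable_llr_of_ae_le [IsFiniteMeasure μ] [IsFiniteMeasure ν] (hμν : μ ≪ ν)
    {C : ℝ} (hC : ∀ᵐ x ∂μ, llr μ ν x ≤ C) : Integrable (llr μ ν) μ := by
  have hneg := aux_integrable_neg_part_llr hμν
  refine Integrable.mono' ((integrable_const (max C 0)).add hneg)
    (stronglyMeasurable_llr μ ν).aestronglyMeasurable ?_
  filter_upwards [hC] with x hx
  rw [Real.norm_eq_abs]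
  simp only [Pi.add_apply]
  rcases le_total (llr μ ν x) 0 with h | h
  · rw [abs_of_nonpos h]
    have h1 : - llr μ ν x ≤ max (- llr μ ν x) 0 := le_max_left _ _
    have h2 : (0:ℝ) ≤ max C 0 := le_max_right _ _
    linarith
  · rw [abs_of_nonneg h]
    have h1 : C ≤ max C 0 := le_max_left _ _
    have h2 : (0:ℝ) ≤ max (- llr μ ν x) 0 := le_max_right _ _
    linarith

lemma aux_integral_llr_nonneg [IsProbabilityMeasure μ] [IsProbabilityMeasure ν] (hμν : μ ≪ ν)
    (h_int : Integrable (llr μ ν) μ) : 0 ≤ ∫ x, llr μ ν x ∂μ := by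
  have hexp : Integrable (fun x => Real.exp (- llr μ ν x)) μ :=
    Measure.integrable_toReal_rnDeriv.congr (exp_neg_llr hμν).symm
  have h1 : ∫ x, Real.exp (- llr μ ν x) ∂μ ≤ 1 := by
    rw [integral_congr_ae (exp_neg_llr hμν), Measure.integral_toReal_rnDeriv']
    have h2 : (0:ℝ) ≤ ((ν.singularPart μ) Set.univ).toReal := ENNReal.toReal_nonneg
    simp only [measureReal_def, measure_univ, ENNReal.toReal_one]
    linarith
  have h2 : Real.exp (∫ x, - llr μ ν x ∂μ) ≤ ∫ x, Real.exp (- llr μ ν x) ∂μ :=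
    convexOn_exp.map_integral_le Real.continuous_exp.continuousOn isClosed_univ
      (Filter.Eventually.of_forall fun x => Set.mem_univ _) h_int.neg
      (by exact hexp)
  rw [integral_neg] at h2
  have h3 := Real.exp_le_one_iff.mp (h2.trans h1)
  linarith

end Aux

/-- compensation identity for the arithmetic-average (AA) mixture:
`∑ wᵢ D(μᵢ‖g) = ∑ wᵢ D(μᵢ‖μ_AA) + D(μ_AA‖g)` when each `D(μᵢ‖g)` is finite. -/
theorem aa_fusion_kl_compensation
    {α : Type*} [MeasurableSpace α]
    {ι : Type*} [Fintype ι] [Nonempty ι]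
    (w : ι → ℝ) (hw_pos : ∀ i, 0 < w i) (hw_sum : ∑ i, w i = 1)
    (μ : ι → Measure α) (hμ : ∀ i, IsProbabilityMeasure (μ i))
    (g : Measure α) (hg : IsProbabilityMeasure g)
    (hfin : ∀ i, klDiv (μ i) g ≠ ⊤) :
    ∑ i, ENNReal.ofReal (w i) * klDiv (μ i) g
      = ∑ i, ENNReal.ofReal (w i) * klDiv (μ i) (∑ j, ENNReal.ofReal (w j) • μ j)
        + klDiv (∑ j, ENNReal.ofReal (w j) • μ j) g := by
  haveI : ∀ i, IsProbabilityMeasure (μ i) := hμ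
  set ν : Measure α := ∑ j, ENNReal.ofReal (w j) • μ j with hν
  have hw0 : ∀ i, ENNReal.ofReal (w i) ≠ 0 := fun i => by
    simp [ENNReal.ofReal_eq_zero, not_le, hw_pos i]
  haveI hνP : IsProbabilityMeasure ν := by
    constructor
    rw [hν, Measure.finset_sum_apply]
    simp only [Measure.smul_apply, measure_univ, smul_eq_mul, mul_one]
    rw [← ENNReal.ofReal_sum_of_nonneg (fun i _ => (hw_pos i).le), hw_sum, ENNReal.ofReal_one]
  have hcond : ∀ i, (μ i ≪ g ∧ Integrable (llr (μ i) g) (μ i)) := fun i => by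
    by_contra h
    exact hfin i (by rw [klDiv, if_neg h])
  have hig : ∀ i, μ i ≪ g := fun i => (hcond i).1
  have hint : ∀ i, Integrable (llr (μ i) g) (μ i) := fun i => (hcond i).2
  have hle : ∀ i, ENNReal.ofReal (w i) • μ i ≤ ν := by
    intro i
    rw [hν, Measure.le_iff]
    intro s hs
    rw [Measure.finset_sum_apply]
    exact Finset.single_le_sum (f := fun j => (ENNReal.ofReal (w j) • μ j) s)
      (fun j _ => zero_le) (Finset.mem_univ i)
  have hiν : ∀ i, μ i ≪ ν := by
    intro i
    refine Measure.AbsolutelyContinuous.trans ?_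
      (Measure.absolutelyContinuous_of_le (hle i))
    refine Measure.AbsolutelyContinuous.mk fun s _ h0 => ?_
    rw [Measure.smul_apply, smul_eq_mul, mul_eq_zero] at h0
    exact h0.resolve_left (hw0 i)
  have hνg : ν ≪ g := by
    refine Measure.AbsolutelyContinuous.mk fun s hs h0 => ?_
    rw [hν, Measure.finset_sum_apply]
    simp only [Measure.smul_apply, smul_eq_mul]
    refine Finset.sum_eq_zero fun i _ => ?_
    rw [hig i h0, mul_zero]
  -- The llr of `μ i` w.r.t. `ν` is a.e. bounded above
  have hbound : ∀ i, ∀ᵐ x ∂(μ i),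
      llr (μ i) ν x ≤ Real.log ((ENNReal.ofReal (w i))⁻¹).toReal := by
    intro i
    have h1 : (ENNReal.ofReal (w i) • μ i).rnDeriv ν ≤ᵐ[ν] 1 :=
      Measure.rnDeriv_le_one_of_le (hle i)
    have h2 : (ENNReal.ofReal (w i) • μ i).rnDeriv ν
        =ᵐ[ν] ENNReal.ofReal (w i) • (μ i).rnDeriv ν :=
      Measure.rnDeriv_smul_left_of_ne_top (μ i) ν ENNReal.ofReal_ne_top
    have h3 : ∀ᵐ x ∂ν, (μ i).rnDeriv ν x ≤ (ENNReal.ofReal (w i))⁻¹ := by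
      filter_upwards [h1, h2] with x hx1 hx2
      rw [hx2] at hx1
      simp only [Pi.smul_apply, smul_eq_mul, Pi.one_apply] at hx1
      rw [ENNReal.le_inv_iff_mul_le, mul_comm]
      exact hx1
    filter_upwards [(hiν i).ae_le h3, Measure.rnDeriv_pos (hiν i),
      (hiν i).ae_le (Measure.rnDeriv_lt_top (μ i) ν)] with x hx hpos hlt
    have h4 : ((μ i).rnDeriv ν x).toReal ≤ ((ENNReal.ofReal (w i))⁻¹).toReal :=
      ENNReal.toReal_mono (by simp [ENNReal.inv_ne_top, hw0 i]) hx
    exact Real.log_le_log (ENNReal.toReal_pos hpos.ne' hlt.ne) h4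
  have hint_iν : ∀ i, Integrable (llr (μ i) ν) (μ i) := fun i =>
    aux_integrable_llr_of_ae_le (hiν i) (hbound i)
  -- chain rule for llr
  have hchain : ∀ i, llr (μ i) g =ᵐ[μ i] fun x => llr (μ i) ν x + llr ν g x := by
    intro i
    have hmul : (μ i).rnDeriv ν * ν.rnDeriv g =ᵐ[g] (μ i).rnDeriv g :=
      Measure.rnDeriv_mul_rnDeriv (hiν i)
    filter_upwards [(hig i).ae_le hmul, Measure.rnDeriv_pos (hiν i),
      (hiν i).ae_le (Measure.rnDeriv_lt_top (μ i) ν),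
      (hiν i).ae_le (Measure.rnDeriv_pos hνg),
      (hig i).ae_le (Measure.rnDeriv_lt_top ν g)] with x hx hpos1 hlt1 hpos2 hlt2
    have ha : (((μ i).rnDeriv ν x).toReal : ℝ) ≠ 0 :=
      (ENNReal.toReal_pos hpos1.ne' hlt1.ne).ne'
    have hb : ((ν.rnDeriv g x).toReal : ℝ) ≠ 0 :=
      (ENNReal.toReal_pos hpos2.ne' hlt2.ne).ne'
    simp only [llr]
    rw [← hx, Pi.mul_apply, ENNReal.toReal_mul, Real.log_mul ha hb]
  have hd_int : ∀ i, Integrable (llr ν g) (μ i) := by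
    intro i
    have heq : (fun x => llr (μ i) g x - llr (μ i) ν x) =ᵐ[μ i] llr ν g := by
      filter_upwards [hchain i] with x hx
      linarith
    exact ((hint i).sub (hint_iν i)).congr heq
  have hνg_int : Integrable (llr ν g) ν := by
    rw [hν, integrable_finset_sum_measure]
    intro i _
    rw [integrable_smul_measure (hw0 i) ENNReal.ofReal_ne_top]
    exact hd_int i
  have hsum_int : ∫ x, llr ν g x ∂ν = ∑ i, w i * ∫ x, llr ν g x ∂(μ i) := by
    rw [hν, integral_finset_sum_measure
      (fun i _ => (hd_int i).smul_measure ENNReal.ofReal_ne_top)]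
    refine Finset.sum_congr rfl fun i _ => ?_
    rw [integral_smul_measure, ENNReal.toReal_ofReal (hw_pos i).le, smul_eq_mul]
  have hInt : ∀ i, ∫ x, llr (μ i) g x ∂(μ i)
      = ∫ x, llr (μ i) ν x ∂(μ i) + ∫ x, llr ν g x ∂(μ i) := by
    intro i
    rw [integral_congr_ae (hchain i), integral_add (hint_iν i) (hd_int i)]
  have ha_nn : ∀ i, 0 ≤ ∫ x, llr (μ i) g x ∂(μ i) := fun i =>
    aux_integral_llr_nonneg (hig i) (hint i)
  have hb_nn : ∀ i, 0 ≤ ∫ x, llr (μ i) ν x ∂(μ i) := fun i =>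
    aux_integral_llr_nonneg (hiν i) (hint_iν i)
  have hc_nn : 0 ≤ ∫ x, llr ν g x ∂ν := aux_integral_llr_nonneg hνg hνg_int
  have hklg : ∀ i, klDiv (μ i) g = ENNReal.ofReal (∫ x, llr (μ i) g x ∂(μ i)) := fun i => by
    rw [klDiv, if_pos ⟨hig i, hint i⟩]
  have hklν : ∀ i, klDiv (μ i) ν = ENNReal.ofReal (∫ x, llr (μ i) ν x ∂(μ i)) := fun i => by
    rw [klDiv, if_pos ⟨hiν i, hint_iν i⟩]
  have hklνg : klDiv ν g = ENNReal.ofReal (∫ x, llr ν g x ∂ν) := by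
    rw [klDiv, if_pos ⟨hνg, hνg_int⟩]
  simp only [hklg, hklν, hklνg]
  calc ∑ i, ENNReal.ofReal (w i) * ENNReal.ofReal (∫ x, llr (μ i) g x ∂(μ i))
      = ENNReal.ofReal (∑ i, w i * ∫ x, llr (μ i) g x ∂(μ i)) := by
        rw [ENNReal.ofReal_sum_of_nonneg (fun i _ => mul_nonneg (hw_pos i).le (ha_nn i))]
        exact Finset.sum_congr rfl fun i _ => (ENNReal.ofReal_mul (hw_pos i).le).symm
    _ = ENNReal.ofReal ((∑ i, w i * ∫ x, llr (μ i) ν x ∂(μ i)) + ∫ x, llr ν g x ∂ν) := by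
        congr 1
        rw [hsum_int, ← Finset.sum_add_distrib]
        refine Finset.sum_congr rfl fun i _ => ?_
        rw [hInt i]
        ring
    _ = ENNReal.ofReal (∑ i, w i * ∫ x, llr (μ i) ν x ∂(μ i))
          + ENNReal.ofReal (∫ x, llr ν g x ∂ν) :=
        ENNReal.ofReal_add (Finset.sum_nonneg fun i _ =>
          mul_nonneg (hw_pos i).le (hb_nn i)) hc_nn
    _ = ∑ i, ENNReal.ofReal (w i) * ENNReal.ofReal (∫ x, llr (μ i) ν x ∂(μ i))
          + ENNReal.ofReal (∫ x, llr ν g x ∂ν) := by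
        congr 1
        rw [ENNReal.ofReal_sum_of_nonneg (fun i _ => mul_nonneg (hw_pos i).le (hb_nn i))]
        exact Finset.sum_congr rfl fun i _ => ENNReal.ofReal_mul (hw_pos i).le
end

section
/- Let I be a finite nonempty index set, let (w_i)_{i∈I} be positive real weights with ∑_{i∈I} w_i = 1, and let (μ_i)_{i∈I} be probability measures on a measurable space. Then the mixture μ_AA = ∑_{i∈I} w_i μ_i minimizes the weighted sum of Kullback–Leibler divergences from the fusing measures: for every probability measure g on the same space, ∑_{i∈I} w_i · D_KL(μ_i ‖ μ_AA) ≤ ∑_{i∈I} w_i · D_KL(μ_i ‖ g) (an inequality in the extended nonnegative reals). -/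
open MeasureTheory BigOperators ENNReal
open scoped Classical

section AuxLemmas

variable {α : Type*} [MeasurableSpace α]

/-- Gibbs' inequality: the KL integral between probability measures is nonnegative. -/
lemma aux_gibbs {μ ν : Measure α} [IsProbabilityMeasure μ] [IsProbabilityMeasure ν]
    (hμν : μ ≪ ν) (h_int : Integrable (llr μ ν) μ) : 0 ≤ ∫ x, llr μ ν x ∂μ := by
  have hb : ∀ᵐ x ∂μ, 1 - (ν.rnDeriv μ x).toReal ≤ llr μ ν x := by
    filter_upwards [exp_neg_llr hμν] with x hx
    have h1 : Real.log (Real.exp (-llr μ ν x)) ≤ Real.exp (-llr μ ν x) - 1 :=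
      Real.log_le_sub_one_of_pos (Real.exp_pos _)
    rw [Real.log_exp, hx] at h1
    linarith
  have hint2 : Integrable (fun x => 1 - (ν.rnDeriv μ x).toReal) μ :=
    (integrable_const 1).sub Measure.integrable_toReal_rnDeriv
  have h2 : ∫ x, (1 - (ν.rnDeriv μ x).toReal) ∂μ ≤ ∫ x, llr μ ν x ∂μ :=
    integral_mono_ae hint2 h_int hb
  have h3 : ∫ x, (ν.rnDeriv μ x).toReal ∂μ ≤ 1 := by
    have := Measure.setIntegral_toReal_rnDeriv_le (μ := ν) (ν := μ) (s := Set.univ)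
      (measure_ne_top ν Set.univ)
    simpa [measure_univ] using this
  have h4 : ∫ x, (1 - (ν.rnDeriv μ x).toReal) ∂μ
      = 1 - ∫ x, (ν.rnDeriv μ x).toReal ∂μ := by
    rw [integral_sub (integrable_const 1) Measure.integrable_toReal_rnDeriv]
    simp [measure_univ]
  linarith

lemma aux_logpos_mono {s t : ℝ} (hs : 0 ≤ s) (hst : s ≤ t) :
    max (Real.log s) 0 ≤ max (Real.log t) 0 := by
  rcases eq_or_lt_of_le hs with h0 | h0
  · simp [← h0]
  · exact max_le_max (Real.log_le_log h0 hst) le_rfl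

lemma aux_P_mono {a b : ℝ≥0∞} (hab : a ≤ b) (hb : b ≠ ⊤) :
    a * ENNReal.ofReal (max (Real.log a.toReal) 0)
      ≤ b * ENNReal.ofReal (max (Real.log b.toReal) 0) := by
  have ha : a ≠ ⊤ := (hab.trans_lt (lt_top_iff_ne_top.mpr hb)).ne
  refine mul_le_mul' hab (ENNReal.ofReal_le_ofReal ?_)
  exact aux_logpos_mono ENNReal.toReal_nonneg ((ENNReal.toReal_le_toReal ha hb).mpr hab)

lemma aux_rnDeriv_sum {ι : Type*} (s : Finset ι) (ρ : ι → Measure α)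
    [∀ i, IsFiniteMeasure (ρ i)] (g : Measure α) [SigmaFinite g] :
    (∑ i ∈ s, ρ i).rnDeriv g =ᵐ[g] fun x => ∑ i ∈ s, (ρ i).rnDeriv g x := by
  classical
  induction s using Finset.induction_on with
  | empty =>
    simp only [Finset.sum_empty]
    filter_upwards [Measure.rnDeriv_zero g] with x hx
    simpa using hx
  | @insert a s ha ih =>
    haveI : IsFiniteMeasure (∑ i ∈ s, ρ i) := by
      constructor
      rw [Measure.finset_sum_apply]
      exact ENNReal.sum_lt_top.mpr fun i _ => measure_lt_top _ _
    rw [Finset.sum_insert ha]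
    filter_upwards [Measure.rnDeriv_add (ρ a) (∑ i ∈ s, ρ i) g, ih] with x hx1 hx2
    rw [hx1, Pi.add_apply, hx2, Finset.sum_insert ha]

end AuxLemmas

/-- the arithmetic-average (AA) mixture minimizes the weighted sum of KL
divergences from the fusing measures over all probability measures `g`. -/
theorem aa_fusion_minimizes_weighted_kl
    {α : Type*} [MeasurableSpace α]
    {ι : Type*} [Fintype ι] [Nonempty ι]
    (w : ι → ℝ) (hw_pos : ∀ i, 0 < w i) (hw_sum : ∑ i, w i = 1)
    (μ : ι → Measure α) (hμ : ∀ i, IsProbabilityMeasure (μ i)) :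
    ∀ g : Measure α, IsProbabilityMeasure g →
      ∑ i, ENNReal.ofReal (w i) * klDiv (μ i) (∑ j, ENNReal.ofReal (w j) • μ j)
        ≤ ∑ i, ENNReal.ofReal (w i) * klDiv (μ i) g := by
  intro g hg
  classical
  haveI := hg
  set F : Measure α := ∑ j, ENNReal.ofReal (w j) • μ j with hF
  have hw0 : ∀ i, (ENNReal.ofReal (w i)) ≠ 0 := fun i => by
    simp [ENNReal.ofReal_eq_zero, not_le.mpr (hw_pos i)]
  have hwsum' : ∑ j, ENNReal.ofReal (w j) = 1 := by
    rw [← ENNReal.ofReal_sum_of_nonneg fun i _ => (hw_pos i).le, hw_sum, ENNReal.ofReal_one]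
  have hF_apply : ∀ s : Set α, F s = ∑ j, ENNReal.ofReal (w j) * μ j s := fun s => by
    rw [hF, Measure.finset_sum_apply]
    simp [Measure.smul_apply, smul_eq_mul]
  haveI hFprob : IsProbabilityMeasure F := by
    constructor
    rw [hF_apply]
    have h1 : ∀ j, μ j Set.univ = 1 := fun j => (hμ j).measure_univ
    simp [h1, hwsum']
  have hμF : ∀ i, μ i ≪ F := by
    intro i
    refine Measure.AbsolutelyContinuous.mk fun s hs h0 => ?_
    rw [hF_apply] at h0
    have h1 := Finset.sum_eq_zero_iff.mp h0 i (Finset.mem_univ i)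
    rcases mul_eq_zero.mp h1 with h | h
    · exact absurd h (hw0 i)
    · exact h
  by_cases hcase : ∀ i, μ i ≪ g ∧ Integrable (llr (μ i) g) (μ i)
  case neg =>
    obtain ⟨i, hi⟩ := not_forall.mp hcase
    have htop : ENNReal.ofReal (w i) * klDiv (μ i) g = ⊤ := by
      rw [klDiv, if_neg hi, ENNReal.mul_top (hw0 i)]
    have hRtop : ∑ i, ENNReal.ofReal (w i) * klDiv (μ i) g = ⊤ :=
      ENNReal.sum_eq_top.mpr ⟨i, Finset.mem_univ i, htop⟩
    rw [hRtop]; exact le_top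
  case pos =>
  have hμg : ∀ i, μ i ≪ g := fun i => (hcase i).1
  have h_int : ∀ i, Integrable (llr (μ i) g) (μ i) := fun i => (hcase i).2
  have hFg : F ≪ g := by
    refine Measure.AbsolutelyContinuous.mk fun s hs h0 => ?_
    rw [hF_apply]
    exact Finset.sum_eq_zero fun j _ => by rw [hμg j h0, mul_zero]
  -- Radon–Nikodym derivative of the mixture
  have hF_rn : F.rnDeriv g =ᵐ[g] fun x => ∑ j, ENNReal.ofReal (w j) * (μ j).rnDeriv g x := by
    have h1 := @aux_rnDeriv_sum α _ ι (Finset.univ (α := ι))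
      (fun j => ENNReal.ofReal (w j) • μ j)
      (fun j => ⟨by
        haveI := hμ j
        rw [Measure.smul_apply, smul_eq_mul, measure_univ, mul_one]
        exact ofReal_lt_top⟩)
      g inferInstance
    have h2 : ∀ j : ι, ((ENNReal.ofReal (w j)) • μ j).rnDeriv g
        =ᵐ[g] fun x => ENNReal.ofReal (w j) * (μ j).rnDeriv g x := fun j => by
      haveI := hμ j
      filter_upwards [Measure.rnDeriv_smul_left_of_ne_top (μ j) g
        (ENNReal.ofReal_ne_top)] with x hx
      rw [hx]
      simp [smul_eq_mul]
    have h3 : ∀ᵐ x ∂g, ∀ j, ((ENNReal.ofReal (w j)) • μ j).rnDeriv g x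
        = ENNReal.ofReal (w j) * (μ j).rnDeriv g x := ae_all_iff.mpr fun j => h2 j
    filter_upwards [h1, h3] with x hx1 hx3
    rw [hF]
    rw [hx1]
    exact Finset.sum_congr rfl fun j _ => hx3 j
  -- chain rule for llr
  have hchain : ∀ i, ∀ᵐ x ∂(μ i), llr (μ i) g x = llr (μ i) F x + llr F g x := by
    intro i
    haveI := hμ i
    have h1 : (μ i).rnDeriv F * F.rnDeriv g =ᵐ[g] (μ i).rnDeriv g :=
      Measure.rnDeriv_mul_rnDeriv (hμF i)
    filter_upwards [(hμg i).ae_le h1,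
      Measure.rnDeriv_pos (hμF i),
      (hμF i).ae_le (Measure.rnDeriv_ne_top (μ i) F),
      (hμF i).ae_le (Measure.rnDeriv_pos hFg),
      (hμg i).ae_le (Measure.rnDeriv_ne_top F g)] with x hx hpos1 hfin1 hpos2 hfin2
    have ha : ((μ i).rnDeriv F x).toReal ≠ 0 := (ENNReal.toReal_pos hpos1.ne' hfin1).ne'
    have hb : (F.rnDeriv g x).toReal ≠ 0 := (ENNReal.toReal_pos hpos2.ne' hfin2).ne'
    have hx' : (μ i).rnDeriv g x = (μ i).rnDeriv F x * F.rnDeriv g x := by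
      rw [← hx]; rfl
    simp only [llr]
    rw [hx', ENNReal.toReal_mul, Real.log_mul ha hb]
  -- lower bound on llr F g
  have hlow : ∀ i, ∀ᵐ x ∂(μ i), Real.log (w i) + llr (μ i) g x ≤ llr F g x := by
    intro i
    haveI := hμ i
    filter_upwards [(hμg i).ae_le hF_rn,
      Measure.rnDeriv_pos (hμg i),
      (hμg i).ae_le (Measure.rnDeriv_ne_top F g),
      (hμg i).ae_le (Measure.rnDeriv_ne_top (μ i) g)] with x hx hpos hfinF hfin
    have h1 : ENNReal.ofReal (w i) * (μ i).rnDeriv g x ≤ F.rnDeriv g x := by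
      rw [hx]
      exact Finset.single_le_sum
        (f := fun j => ENNReal.ofReal (w j) * (μ j).rnDeriv g x)
        (fun j _ => zero_le) (Finset.mem_univ i)
    have h2 : w i * ((μ i).rnDeriv g x).toReal ≤ (F.rnDeriv g x).toReal := by
      have := ENNReal.toReal_mono hfinF h1
      rwa [ENNReal.toReal_mul, ENNReal.toReal_ofReal (hw_pos i).le] at this
    have hpos' : 0 < w i * ((μ i).rnDeriv g x).toReal :=
      mul_pos (hw_pos i) (ENNReal.toReal_pos hpos.ne' hfin)
    have hlog : Real.log (w i) + llr (μ i) g x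
        = Real.log (w i * ((μ i).rnDeriv g x).toReal) := by
      simp only [llr]
      rw [Real.log_mul (hw_pos i).ne' (ENNReal.toReal_pos hpos.ne' hfin).ne']
    rw [hlog]
    simp only [llr]
    exact Real.log_le_log hpos' h2
  -- key finiteness: the positive part of llr F g has finite lintegral w.r.t. F
  have hmeas : ∀ ρ : Measure α, Measurable fun x => ENNReal.ofReal (max (llr ρ g x) 0) :=
    fun ρ => ENNReal.measurable_ofReal.comp ((measurable_llr ρ g).max measurable_const)
  have hkey : ∫⁻ x, ENNReal.ofReal (max (llr F g x) 0) ∂F < ⊤ := by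
    have hF_eq : ∫⁻ x, ENNReal.ofReal (max (llr F g x) 0) ∂F
        = ∫⁻ x, F.rnDeriv g x * ENNReal.ofReal (max (llr F g x) 0) ∂g :=
      (lintegral_rnDeriv_mul hFg (hmeas F).aemeasurable).symm
    have hμ_eq : ∀ k, ∫⁻ x, ENNReal.ofReal (max (llr (μ k) g x) 0) ∂(μ k)
        = ∫⁻ x, (μ k).rnDeriv g x * ENNReal.ofReal (max (llr (μ k) g x) 0) ∂g := fun k => by
      haveI := hμ k
      exact (lintegral_rnDeriv_mul (hμg k) (hmeas (μ k)).aemeasurable).symm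
    have hfin_all : ∀ᵐ x ∂g, ∀ k, (μ k).rnDeriv g x ≠ ⊤ := by
      rw [ae_all_iff]
      intro k
      haveI := hμ k
      exact Measure.rnDeriv_ne_top (μ k) g
    have hptw : ∀ᵐ x ∂g,
        F.rnDeriv g x * ENNReal.ofReal (max (llr F g x) 0)
          ≤ ∑ k, (μ k).rnDeriv g x * ENNReal.ofReal (max (llr (μ k) g x) 0) := by
      filter_upwards [hF_rn, hfin_all] with x hx hfin
      obtain ⟨k₀, -, hk₀⟩ := Finset.exists_max_image Finset.univ
        (fun k => (μ k).rnDeriv g x) Finset.univ_nonempty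
      have hle : F.rnDeriv g x ≤ (μ k₀).rnDeriv g x := by
        rw [hx]
        calc ∑ j, ENNReal.ofReal (w j) * (μ j).rnDeriv g x
            ≤ ∑ j, ENNReal.ofReal (w j) * (μ k₀).rnDeriv g x :=
              Finset.sum_le_sum fun j _ => mul_le_mul_right (hk₀ j (Finset.mem_univ j)) _
          _ = 1 * (μ k₀).rnDeriv g x := by rw [← Finset.sum_mul, hwsum']
          _ = (μ k₀).rnDeriv g x := one_mul _
      calc F.rnDeriv g x * ENNReal.ofReal (max (llr F g x) 0)
          ≤ (μ k₀).rnDeriv g x * ENNReal.ofReal (max (llr (μ k₀) g x) 0) := by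
            simp only [llr]
            exact aux_P_mono hle (hfin k₀)
        _ ≤ ∑ k, (μ k).rnDeriv g x * ENNReal.ofReal (max (llr (μ k) g x) 0) :=
            Finset.single_le_sum
              (f := fun k => (μ k).rnDeriv g x * ENNReal.ofReal (max (llr (μ k) g x) 0))
              (fun k _ => zero_le) (Finset.mem_univ k₀)
    have hbound_k : ∀ k, ∫⁻ x, ENNReal.ofReal (max (llr (μ k) g x) 0) ∂(μ k) < ⊤ := fun k => by
      haveI := hμ k
      have hptle : ∀ x, ENNReal.ofReal (max (llr (μ k) g x) 0)
          ≤ (‖llr (μ k) g x‖₊ : ℝ≥0∞) := fun x => by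
        rw [← enorm_eq_nnnorm, Real.enorm_eq_ofReal_abs]
        exact ENNReal.ofReal_le_ofReal (max_le (le_abs_self _) (abs_nonneg _))
      calc ∫⁻ x, ENNReal.ofReal (max (llr (μ k) g x) 0) ∂(μ k)
          ≤ ∫⁻ x, (‖llr (μ k) g x‖₊ : ℝ≥0∞) ∂(μ k) := lintegral_mono hptle
        _ < ⊤ := (h_int k).2
    rw [hF_eq]
    calc ∫⁻ x, F.rnDeriv g x * ENNReal.ofReal (max (llr F g x) 0) ∂g
        ≤ ∫⁻ x, ∑ k, (μ k).rnDeriv g x * ENNReal.ofReal (max (llr (μ k) g x) 0) ∂g :=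
          lintegral_mono_ae hptw
      _ = ∑ k, ∫⁻ x, (μ k).rnDeriv g x * ENNReal.ofReal (max (llr (μ k) g x) 0) ∂g :=
          lintegral_finset_sum _ fun k _ =>
            (Measure.measurable_rnDeriv (μ k) g).mul (hmeas (μ k))
      _ = ∑ k, ∫⁻ x, ENNReal.ofReal (max (llr (μ k) g x) 0) ∂(μ k) :=
          Finset.sum_congr rfl fun k _ => (hμ_eq k).symm
      _ < ⊤ := ENNReal.sum_lt_top.mpr fun k _ => hbound_k k
  -- lintegral w.r.t. μ i is controlled by lintegral w.r.t. F
  have hlint_le : ∀ (i : ι) (h : α → ℝ≥0∞),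
      ∫⁻ x, h x ∂(μ i) ≤ (ENNReal.ofReal (w i))⁻¹ * ∫⁻ x, h x ∂F := by
    intro i h
    have h1 : ∫⁻ x, h x ∂F = ∑ j, ENNReal.ofReal (w j) * ∫⁻ x, h x ∂(μ j) := by
      rw [hF, lintegral_finset_sum_measure]
      exact Finset.sum_congr rfl fun j _ => lintegral_smul_measure _ _
    have h2 : ENNReal.ofReal (w i) * ∫⁻ x, h x ∂(μ i) ≤ ∫⁻ x, h x ∂F := by
      rw [h1]
      exact Finset.single_le_sum (f := fun j => ENNReal.ofReal (w j) * ∫⁻ x, h x ∂(μ j))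
        (fun j _ => zero_le) (Finset.mem_univ i)
    calc ∫⁻ x, h x ∂(μ i)
        = (ENNReal.ofReal (w i))⁻¹ * (ENNReal.ofReal (w i) * ∫⁻ x, h x ∂(μ i)) := by
          rw [← mul_assoc, ENNReal.inv_mul_cancel (hw0 i) ENNReal.ofReal_ne_top, one_mul]
      _ ≤ (ENNReal.ofReal (w i))⁻¹ * ∫⁻ x, h x ∂F := mul_le_mul_right h2 _
  -- integrability of llr F g w.r.t. each μ i
  have hint_Fg : ∀ i, Integrable (llr F g) (μ i) := by
    intro i
    haveI := hμ i
    refine ⟨(measurable_llr F g).aestronglyMeasurable, ?_⟩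
    have hintc : Integrable (fun x => Real.log (w i) + llr (μ i) g x) (μ i) :=
      (integrable_const (Real.log (w i))).add (h_int i)
    have hb : ∀ᵐ x ∂(μ i), (‖llr F g x‖₊ : ℝ≥0∞)
        ≤ ENNReal.ofReal (max (llr F g x) 0)
          + (‖Real.log (w i) + llr (μ i) g x‖₊ : ℝ≥0∞) := by
      filter_upwards [hlow i] with x hx
      rw [← enorm_eq_nnnorm, ← enorm_eq_nnnorm, Real.enorm_eq_ofReal_abs, Real.enorm_eq_ofReal_abs,
        ← ENNReal.ofReal_add (le_max_right _ _) (abs_nonneg _)]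
      refine ENNReal.ofReal_le_ofReal ?_
      rcases abs_cases (llr F g x) with ⟨h1, h2⟩ | ⟨h1, h2⟩
      · rw [h1]
        have := abs_nonneg (Real.log (w i) + llr (μ i) g x)
        have := le_max_left (llr F g x) (0 : ℝ)
        linarith
      · rw [h1]
        have h3 : -(llr F g x) ≤ -(Real.log (w i) + llr (μ i) g x) := by linarith
        have h4 : -(Real.log (w i) + llr (μ i) g x)
            ≤ |Real.log (w i) + llr (μ i) g x| := neg_le_abs _
        have h5 : (0 : ℝ) ≤ max (llr F g x) 0 := le_max_right _ _
        linarith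
    have hHFI : ∫⁻ x, (‖llr F g x‖₊ : ℝ≥0∞) ∂(μ i) < ⊤ := by
      calc ∫⁻ x, (‖llr F g x‖₊ : ℝ≥0∞) ∂(μ i)
          ≤ ∫⁻ x, (ENNReal.ofReal (max (llr F g x) 0)
              + (‖Real.log (w i) + llr (μ i) g x‖₊ : ℝ≥0∞)) ∂(μ i) := lintegral_mono_ae hb
        _ = (∫⁻ x, ENNReal.ofReal (max (llr F g x) 0) ∂(μ i))
              + ∫⁻ x, (‖Real.log (w i) + llr (μ i) g x‖₊ : ℝ≥0∞) ∂(μ i) :=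
            lintegral_add_left (hmeas F) _
        _ < ⊤ := by
            refine ENNReal.add_lt_top.mpr ⟨?_, hintc.2⟩
            calc ∫⁻ x, ENNReal.ofReal (max (llr F g x) 0) ∂(μ i)
                ≤ (ENNReal.ofReal (w i))⁻¹ * ∫⁻ x, ENNReal.ofReal (max (llr F g x) 0) ∂F :=
                  hlint_le i _
              _ < ⊤ := ENNReal.mul_lt_top
                  (lt_top_iff_ne_top.mpr (ENNReal.inv_ne_top.mpr (hw0 i))) hkey
    exact hHFI
  -- integrability of llr F g w.r.t. F
  have hint_FgF : Integrable (llr F g) F := by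
    rw [hF, integrable_finset_sum_measure]
    intro j _
    exact (integrable_smul_measure (hw0 j) ENNReal.ofReal_ne_top).mpr (hint_Fg j)
  -- integrability of llr (μ i) F w.r.t. μ i
  have hint_iF : ∀ i, Integrable (llr (μ i) F) (μ i) := fun i => by
    haveI := hμ i
    have h1 : Integrable (fun x => llr (μ i) g x - llr F g x) (μ i) :=
      (h_int i).sub (hint_Fg i)
    refine h1.congr ?_
    filter_upwards [hchain i] with x hx
    linarith
  -- integral identity
  have hAB : ∀ i, ∫ x, llr (μ i) F x ∂(μ i)
      = ∫ x, llr (μ i) g x ∂(μ i) - ∫ x, llr F g x ∂(μ i) := fun i => by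
    haveI := hμ i
    rw [← integral_sub (h_int i) (hint_Fg i)]
    refine integral_congr_ae ?_
    filter_upwards [hchain i] with x hx
    linarith
  have hC : ∫ x, llr F g x ∂F = ∑ i, w i * ∫ x, llr F g x ∂(μ i) := by
    rw [hF, integral_finset_sum_measure (fun j _ =>
      (integrable_smul_measure (hw0 j) ENNReal.ofReal_ne_top).mpr (hint_Fg j))]
    refine Finset.sum_congr rfl fun j _ => ?_
    rw [integral_smul_measure, ENNReal.toReal_ofReal (hw_pos j).le, smul_eq_mul]
  have hC0 : 0 ≤ ∫ x, llr F g x ∂F := aux_gibbs hFg hint_FgF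
  have hA0 : ∀ i, 0 ≤ ∫ x, llr (μ i) F x ∂(μ i) := fun i => by
    haveI := hμ i
    exact aux_gibbs (hμF i) (hint_iF i)
  have hB0 : ∀ i, 0 ≤ ∫ x, llr (μ i) g x ∂(μ i) := fun i => by
    haveI := hμ i
    exact aux_gibbs (hμg i) (h_int i)
  have hreal : ∑ i, w i * ∫ x, llr (μ i) F x ∂(μ i)
      ≤ ∑ i, w i * ∫ x, llr (μ i) g x ∂(μ i) := by
    have heq : ∑ i, w i * ∫ x, llr (μ i) F x ∂(μ i)
        = ∑ i, w i * ∫ x, llr (μ i) g x ∂(μ i) - ∫ x, llr F g x ∂F := by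
      rw [hC, ← Finset.sum_sub_distrib]
      exact Finset.sum_congr rfl fun i _ => by rw [hAB i, mul_sub]
    rw [heq]
    linarith
  have hLHS : ∑ i, ENNReal.ofReal (w i) * klDiv (μ i) F
      = ENNReal.ofReal (∑ i, w i * ∫ x, llr (μ i) F x ∂(μ i)) := by
    rw [ENNReal.ofReal_sum_of_nonneg fun i _ => mul_nonneg (hw_pos i).le (hA0 i)]
    refine Finset.sum_congr rfl fun i _ => ?_
    rw [klDiv, if_pos ⟨hμF i, hint_iF i⟩, ← ENNReal.ofReal_mul (hw_pos i).le]
  have hRHS : ∑ i, ENNReal.ofReal (w i) * klDiv (μ i) g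
      = ENNReal.ofReal (∑ i, w i * ∫ x, llr (μ i) g x ∂(μ i)) := by
    rw [ENNReal.ofReal_sum_of_nonneg fun i _ => mul_nonneg (hw_pos i).le (hB0 i)]
    refine Finset.sum_congr rfl fun i _ => ?_
    rw [klDiv, if_pos ⟨hμg i, h_int i⟩, ← ENNReal.ofReal_mul (hw_pos i).le]
  rw [hLHS, hRHS]
  exact ENNReal.ofReal_le_ofReal hreal
end

section
/- Let I be a finite nonempty index set, let (w_i)_{i∈I} be positive real weights with ∑_{i∈I} w_i = 1, let (μ_i)_{i∈I} be probability measures on a measurable space, and let g be a probability measure with D_KL(μ_i ‖ g) finite for every i ∈ I. Let μ_AA = ∑_{i∈I} w_i μ_i. Then D_KL(μ_AA ‖ g) = ∑_{i∈I} w_i · D_KL(μ_i ‖ g) holds if and only if μ_i = μ_AA for every i ∈ I (equivalently, all μ_i are identical). -/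
open MeasureTheory BigOperators ENNReal
open scoped Classical

/-- Gibbs' inequality with its equality case: for probability measures `μ ≪ ν` with
integrable log-likelihood ratio, `∫ llr μ ν dμ ≥ 0`, with equality iff `μ = ν`. -/
lemma gibbs' {α : Type*} [MeasurableSpace α] (μ ν : Measure α)
    [IsProbabilityMeasure μ] [IsProbabilityMeasure ν]
    (h : μ ≪ ν) (hint : Integrable (llr μ ν) μ) :
    0 ≤ ∫ x, llr μ ν x ∂μ ∧ (∫ x, llr μ ν x ∂μ = 0 → μ = ν) := by
  set f : α → ℝ := fun x ↦ ((μ.rnDeriv ν x).toReal) with hf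
  have hfint : Integrable f ν := Measure.integrable_toReal_rnDeriv
  have hmean : ∫ x, f x ∂ν = 1 := by
    rw [hf, Measure.integral_toReal_rnDeriv h]; simp
  have hkey : ∫ x, llr μ ν x ∂μ = ∫ x, f x * Real.log (f x) ∂ν := by
    rw [← integral_rnDeriv_smul h (f := llr μ ν)]
    simp [llr_def, smul_eq_mul, hf]
  have hgint : Integrable (fun x ↦ f x * Real.log (f x)) ν := by
    have := (integrable_rnDeriv_smul_iff h (f := llr μ ν)).mpr hint
    simpa [llr_def, smul_eq_mul, hf] using this
  have hjen := Real.strictConvexOn_mul_log.ae_eq_const_or_map_average_lt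
    (Real.continuous_mul_log.continuousOn) isClosed_Ici
    (f := f) (μ := ν) (Filter.Eventually.of_forall fun x ↦ ENNReal.toReal_nonneg)
    hfint (by simpa [Function.comp_def] using hgint)
  rw [average_eq_integral, average_eq_integral, hmean] at hjen
  rcases hjen with hconst | hlt
  · have h1 : μ.rnDeriv ν =ᵐ[ν] 1 := by
      filter_upwards [hconst, Measure.rnDeriv_lt_top μ ν] with x hx hlt
      have : (μ.rnDeriv ν x).toReal = 1 := by simpa [hmean, Function.const] using hx
      simpa using (ENNReal.toReal_eq_one_iff _).mp this
    have hμν : μ = ν := by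
      calc μ = ν.withDensity (μ.rnDeriv ν) := (Measure.withDensity_rnDeriv_eq μ ν h).symm
        _ = ν.withDensity 1 := withDensity_congr_ae h1
        _ = ν := by simp
    constructor
    · rw [hkey]
      have : ∫ x, f x * Real.log (f x) ∂ν = 0 := by
        refine integral_eq_zero_of_ae ?_
        filter_upwards [hconst] with x hx
        simp [hmean, Function.const] at hx
        simp [hx]
      linarith [this]
    · intro _; exact hμν
  · simp only [Real.log_one, mul_zero, one_mul] at hlt
    constructor
    · rw [hkey]; linarith
    · intro h0; rw [hkey] at h0; linarith


/-- equality in the mixture KL convexity inequality holds if and only if all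
fusing measures coincide with the mixture. -/
theorem aa_fusion_kl_equality_iff
    {α : Type*} [MeasurableSpace α]
    {ι : Type*} [Fintype ι] [Nonempty ι]
    (w : ι → ℝ) (hw_pos : ∀ i, 0 < w i) (hw_sum : ∑ i, w i = 1)
    (μ : ι → Measure α) (hμ : ∀ i, IsProbabilityMeasure (μ i))
    (g : Measure α) (hg : IsProbabilityMeasure g)
    (hfin : ∀ i, klDiv (μ i) g ≠ ⊤) :
    klDiv (∑ j, ENNReal.ofReal (w j) • μ j) g
        = ∑ i, ENNReal.ofReal (w i) * klDiv (μ i) g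
      ↔ ∀ i, μ i = ∑ j, ENNReal.ofReal (w j) • μ j := by
  have hw0 : ∀ i, (0:ℝ) ≤ w i := fun i ↦ (hw_pos i).le
  set ν : Measure α := ∑ j, ENNReal.ofReal (w j) • μ j with hν
  have hwsum1 : ∑ i, ENNReal.ofReal (w i) = 1 := by
    rw [← ENNReal.ofReal_sum_of_nonneg (fun i _ ↦ hw0 i), hw_sum, ENNReal.ofReal_one]
  have hνapp : ∀ s : Set α, ν s = ∑ j, ENNReal.ofReal (w j) * μ j s := by
    intro s
    rw [hν, Measure.finset_sum_apply]
    simp [Measure.smul_apply, smul_eq_mul]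
  haveI : IsProbabilityMeasure ν := by
    constructor
    rw [hνapp]
    simp [(fun j => (hμ j).measure_univ), hwsum1]
  have hwne : ∀ i, ENNReal.ofReal (w i) ≠ 0 := fun i ↦ by
    simp [ENNReal.ofReal_eq_zero, not_le, hw_pos i]
  -- each μ i ≪ ν
  have hac : ∀ i, μ i ≪ ν := by
    intro i
    intro s hs
    rw [hνapp] at hs
    have := (Finset.sum_eq_zero_iff.mp hs) i (Finset.mem_univ i)
    exact (mul_eq_zero.mp this).resolve_left (hwne i)
  have hcond : ∀ i, μ i ≪ g ∧ Integrable (llr (μ i) g) (μ i) := by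
    intro i
    by_contra hc
    exact hfin i (by rw [klDiv, if_neg hc])
  have hνg : ν ≪ g := by
    intro s hs
    rw [hνapp]
    refine Finset.sum_eq_zero fun j _ ↦ ?_
    rw [(hcond j).1 hs, mul_zero]
  constructor
  · -- hard direction
    intro heq
    have hRfin : ∑ i, ENNReal.ofReal (w i) * klDiv (μ i) g ≠ ⊤ := by
      refine (ENNReal.sum_lt_top.mpr fun i _ ↦ ?_).ne
      exact ENNReal.mul_lt_top ENNReal.ofReal_lt_top ((hfin i).lt_top)
    have hνcond : ν ≪ g ∧ Integrable (llr ν g) ν := by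
      by_contra hc
      rw [klDiv, if_neg hc] at heq
      exact hRfin heq.symm
    -- integrability of llr ν g wrt μ i
    have hμle : ∀ i, μ i ≤ (ENNReal.ofReal (w i))⁻¹ • ν := by
      intro i
      intro s
      rw [Measure.smul_apply, smul_eq_mul, hνapp]
      calc μ i s = (ENNReal.ofReal (w i))⁻¹ * (ENNReal.ofReal (w i) * μ i s) := by
            rw [← mul_assoc, ENNReal.inv_mul_cancel (hwne i) ENNReal.ofReal_ne_top, one_mul]
        _ ≤ _ := by
            refine mul_le_mul_right ?_ _
            exact Finset.single_le_sum (f := fun j ↦ ENNReal.ofReal (w j) * μ j s)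
              (fun j _ ↦ zero_le) (Finset.mem_univ i)
    have hνgint : ∀ i, Integrable (llr ν g) (μ i) := by
      intro i
      refine Integrable.mono_measure ?_ (hμle i)
      exact hνcond.2.smul_measure (by simp [ENNReal.inv_ne_top, hwne i])
    -- chain rule a.e. μ i
    have hch : ∀ i, llr (μ i) g =ᵐ[μ i] llr (μ i) ν + llr ν g := by
      intro i
      have h1 : (μ i).rnDeriv ν * ν.rnDeriv g =ᵐ[g] (μ i).rnDeriv g :=
        Measure.rnDeriv_mul_rnDeriv (hac i)
      filter_upwards [(hcond i).1.ae_le h1,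
        Measure.rnDeriv_pos (hac i),
        (hac i).ae_le (Measure.rnDeriv_lt_top (μ i) ν),
        (hac i).ae_le (Measure.rnDeriv_pos hνg),
        (hcond i).1.ae_le (Measure.rnDeriv_lt_top ν g)] with x hx hpos1 hlt1 hpos2 hlt2
      have ha : ((μ i).rnDeriv ν x).toReal ≠ 0 :=
        ENNReal.toReal_ne_zero.mpr ⟨hpos1.ne', hlt1.ne⟩
      have hb : (ν.rnDeriv g x).toReal ≠ 0 :=
        ENNReal.toReal_ne_zero.mpr ⟨hpos2.ne', hlt2.ne⟩
      simp only [llr_def, Pi.add_apply, Pi.mul_apply] at hx ⊢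
      rw [← hx, ENNReal.toReal_mul, Real.log_mul ha hb]
    have hllrν_int : ∀ i, Integrable (llr (μ i) ν) (μ i) := by
      intro i
      refine Integrable.congr ((hcond i).2.sub (hνgint i)) ?_
      filter_upwards [hch i] with x hx
      simp only [Pi.sub_apply, Pi.add_apply] at hx ⊢
      linarith
    have hint_eq : ∀ i, ∫ x, llr (μ i) ν x ∂(μ i)
        = ∫ x, llr (μ i) g x ∂(μ i) - ∫ x, llr ν g x ∂(μ i) := by
      intro i
      rw [← integral_sub (hcond i).2 (hνgint i)]
      refine integral_congr_ae ?_
      filter_upwards [hch i] with x hx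
      simp only [Pi.sub_apply, Pi.add_apply] at hx ⊢
      linarith
    -- integral over ν as weighted sum
    have hintν : ∫ x, llr ν g x ∂ν = ∑ i, w i * ∫ x, llr ν g x ∂(μ i) := by
      rw [hν, integral_finset_sum_measure (fun i _ ↦
        (hνgint i).smul_measure ENNReal.ofReal_ne_top)]
      refine Finset.sum_congr rfl fun i _ ↦ ?_
      rw [integral_smul_measure, ENNReal.toReal_ofReal (hw0 i), smul_eq_mul]
    -- extract real equality from heq
    set A := ∫ x, llr ν g x ∂ν with hA
    set B := fun i ↦ ∫ x, llr (μ i) g x ∂(μ i) with hB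
    have hBpos : ∀ i, 0 ≤ B i := fun i ↦
      (gibbs' (μ i) g (hcond i).1 (hcond i).2).1
    have hApos : 0 ≤ A := (gibbs' ν g hνcond.1 hνcond.2).1
    have heq' : A = ∑ i, w i * B i := by
      rw [klDiv, if_pos hνcond] at heq
      have hRHS : ∑ i, ENNReal.ofReal (w i) * klDiv (μ i) g
          = ENNReal.ofReal (∑ i, w i * B i) := by
        rw [ENNReal.ofReal_sum_of_nonneg (fun i _ ↦ mul_nonneg (hw0 i) (hBpos i))]
        refine Finset.sum_congr rfl fun i _ ↦ ?_
        rw [klDiv, if_pos (hcond i), ← ENNReal.ofReal_mul (hw0 i)]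
      rw [hRHS] at heq
      exact (ENNReal.ofReal_eq_ofReal_iff hApos
        (Finset.sum_nonneg fun i _ ↦ mul_nonneg (hw0 i) (hBpos i))).mp heq
    -- sum of nonneg terms equal to zero
    have hDpos : ∀ i, 0 ≤ ∫ x, llr (μ i) ν x ∂(μ i) := fun i ↦
      (gibbs' (μ i) ν (hac i) (hllrν_int i)).1
    have hsum0 : ∑ i, w i * ∫ x, llr (μ i) ν x ∂(μ i) = 0 := by
      have : ∑ i, w i * ∫ x, llr (μ i) ν x ∂(μ i)
          = ∑ i, w i * B i - ∑ i, w i * ∫ x, llr ν g x ∂(μ i) := by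
        rw [← Finset.sum_sub_distrib]
        refine Finset.sum_congr rfl fun i _ ↦ ?_
        rw [hint_eq i]; ring
      rw [this, ← hintν, ← heq', sub_self]
    intro i
    have hterm := (Finset.sum_eq_zero_iff_of_nonneg
      (fun j _ ↦ mul_nonneg (hw0 j) (hDpos j))).mp hsum0 i (Finset.mem_univ i)
    have hD0 : ∫ x, llr (μ i) ν x ∂(μ i) = 0 := by
      rcases mul_eq_zero.mp hterm with h | h
      · exact absurd h (hw_pos i).ne'
      · exact h
    exact (gibbs' (μ i) ν (hac i) (hllrν_int i)).2 hD0
  · -- easy direction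
    intro h
    have : ∑ i, ENNReal.ofReal (w i) * klDiv (μ i) g
        = ∑ i, ENNReal.ofReal (w i) * klDiv ν g := by
      refine Finset.sum_congr rfl fun i _ ↦ ?_
      rw [h i]
    rw [this, ← Finset.sum_mul, hwsum1, one_mul]
end
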